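/- Let R be a ring, A an R-algebra, I an ideal of A such that A/I is a finitely generated R-module, and M a finitely generated A-module with gr_I(M) flat over R. Then for every finitely generated R-module N and every n ≥ 0, the sequence 0 → I^{n+1}M ⊗_R N → I^n M ⊗_R N → (I^n M / I^{n+1} M) ⊗_R N → 0 is exact. -/

import Mathlib

open TensorProduct LinearMap
set_option maxHeartbeats 1600000

/-- Diagram chase: if `0 → A → B → C → 0` is exact with `C` flat, and `K → F → N` is a flat
presentation of `N`, then `A ⊗ N → B ⊗ N` is injective. -/
lemma flat_coker_rTensor_injective_aux
    {R A B C N F K : Type*} [CommRing R]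
    [AddCommGroup A] [Module R A] [AddCommGroup B] [Module R B]
    [AddCommGroup C] [Module R C] [AddCommGroup N] [Module R N]
    [AddCommGroup F] [Module R F] [AddCommGroup K] [Module R K]
    (i : A →ₗ[R] B) (p : B →ₗ[R] C)
    (hi : Function.Injective i) (hp : Function.Surjective p)
    (hex : Function.Exact i p) [Module.Flat R C] [Module.Flat R F]
    (π : F →ₗ[R] N) (k : K →ₗ[R] F)
    (hπs : Function.Surjective π) (hki : Function.Injective k)
    (hkπ : Function.Exact k π) :
    Function.Injective (i.rTensor N) := by
  rw [injective_iff_map_eq_zero]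
  intro x hx
  obtain ⟨x', hx'⟩ := LinearMap.lTensor_surjective A hπs x
  have hb : π.lTensor B (i.rTensor F x') = 0 := by
    have h1 : π.lTensor B (i.rTensor F x') = i.rTensor N (π.lTensor A x') := by
      rw [← LinearMap.comp_apply, ← LinearMap.comp_apply,
        LinearMap.lTensor_comp_rTensor, LinearMap.rTensor_comp_lTensor]
    rw [h1, hx', hx]
  obtain ⟨y, hy⟩ := (lTensor_exact B hkπ hπs (i.rTensor F x')).mp hb
  have hc : k.lTensor C (p.rTensor K y) = 0 := by
    have h1 : k.lTensor C (p.rTensor K y) = p.rTensor F (k.lTensor B y) := by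
      rw [← LinearMap.comp_apply, ← LinearMap.comp_apply,
        LinearMap.lTensor_comp_rTensor, LinearMap.rTensor_comp_lTensor]
    rw [h1, hy, ← LinearMap.comp_apply, ← LinearMap.rTensor_comp,
      hex.linearMap_comp_eq_zero, LinearMap.rTensor_zero, LinearMap.zero_apply]
  have hc0 : p.rTensor K y = 0 :=
    (injective_iff_map_eq_zero _).mp
      (Module.Flat.lTensor_preserves_injective_linearMap k hki) _ hc
  obtain ⟨z, hz⟩ := (rTensor_exact K hex hp y).mp hc0
  have hw : i.rTensor F (k.lTensor A z) = i.rTensor F x' := by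
    have h1 : i.rTensor F (k.lTensor A z) = k.lTensor B (i.rTensor K z) := by
      rw [← LinearMap.comp_apply, ← LinearMap.comp_apply,
        LinearMap.lTensor_comp_rTensor, LinearMap.rTensor_comp_lTensor]
    rw [h1, hz, hy]
  have hx'' : x' = k.lTensor A z :=
    (Module.Flat.rTensor_preserves_injective_linearMap i hi hw).symm
  rw [← hx', hx'', ← LinearMap.comp_apply, ← LinearMap.lTensor_comp,
    hkπ.linearMap_comp_eq_zero, LinearMap.lTensor_zero, LinearMap.zero_apply]

/-- If `0 → A → B → C → 0` is exact with `C` flat, then tensoring with any `N`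
preserves injectivity of `A → B`. -/
lemma flat_coker_rTensor_injective
    {R A B C N : Type*} [CommRing R]
    [AddCommGroup A] [Module R A] [AddCommGroup B] [Module R B]
    [AddCommGroup C] [Module R C] [AddCommGroup N] [Module R N]
    (i : A →ₗ[R] B) (p : B →ₗ[R] C)
    (hi : Function.Injective i) (hp : Function.Surjective p)
    (hex : Function.Exact i p) [Module.Flat R C] :
    Function.Injective (i.rTensor N) := by
  set π : (N →₀ R) →ₗ[R] N := Finsupp.linearCombination R (id : N → N) with hπ
  haveI : Module.Flat R (N →₀ R) := inferInstance
  exact flat_coker_rTensor_injective_aux (K := LinearMap.ker π) i p hi hp hex π (LinearMap.ker π).subtype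
    (Finsupp.linearCombination_id_surjective R N)
    ((LinearMap.ker π).injective_subtype)
    (LinearMap.exact_subtype_ker_map π)


/-- If `A/I` is a finite `R`-module and `M` is a finite `A`-module with `gr_I(M)` flat over `R`
(i.e. every graded piece `IⁿM/Iⁿ⁺¹M` is `R`-flat), then for every finite `R`-module `N` and
every `n`, the sequence
`0 → Iⁿ⁺¹M ⊗_R N → IⁿM ⊗_R N → (IⁿM/Iⁿ⁺¹M) ⊗_R N → 0` is exact. -/
theorem graded_flat_tensor_exact
    (R A M N : Type*) [CommRing R] [CommRing A] [Algebra R A]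
    [IsNoetherianRing R] [IsNoetherianRing A]
    [AddCommGroup M] [Module A M] [Module R M] [IsScalarTower R A M]
    [AddCommGroup N] [Module R N]
    (I : Ideal A) (hfinq : Module.Finite R (A ⧸ I)) [Module.Finite A M]
    (hflat : ∀ m : ℕ, Module.Flat R
      (↥((I ^ m • (⊤ : Submodule A M)).restrictScalars R) ⧸
        Submodule.comap ((I ^ m • (⊤ : Submodule A M)).restrictScalars R).subtype
          ((I ^ (m + 1) • (⊤ : Submodule A M)).restrictScalars R)))
    [Module.Finite R N] (n : ℕ) :
    Function.Injective
      (TensorProduct.map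
        (Submodule.inclusion (by
          exact Submodule.restrictScalars_mono R (Submodule.smul_mono_left (Ideal.pow_le_pow_right n.le_succ)) :
            (I ^ (n + 1) • (⊤ : Submodule A M)).restrictScalars R ≤
              (I ^ n • (⊤ : Submodule A M)).restrictScalars R))
        (LinearMap.id (R := R) (M := N))) ∧
    Function.Exact
      (TensorProduct.map
        (Submodule.inclusion (by
          exact Submodule.restrictScalars_mono R (Submodule.smul_mono_left (Ideal.pow_le_pow_right n.le_succ)) :
            (I ^ (n + 1) • (⊤ : Submodule A M)).restrictScalars R ≤
              (I ^ n • (⊤ : Submodule A M)).restrictScalars R))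
        (LinearMap.id (R := R) (M := N)))
      (TensorProduct.map
        (Submodule.mkQ (Submodule.comap
          ((I ^ n • (⊤ : Submodule A M)).restrictScalars R).subtype
          ((I ^ (n + 1) • (⊤ : Submodule A M)).restrictScalars R)))
        (LinearMap.id (R := R) (M := N))) ∧
    Function.Surjective
      (TensorProduct.map
        (Submodule.mkQ (Submodule.comap
          ((I ^ n • (⊤ : Submodule A M)).restrictScalars R).subtype
          ((I ^ (n + 1) • (⊤ : Submodule A M)).restrictScalars R)))
        (LinearMap.id (R := R) (M := N))) := by
  classical
  set B := (I ^ n • (⊤ : Submodule A M)).restrictScalars R with hB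
  set S' := (I ^ (n + 1) • (⊤ : Submodule A M)).restrictScalars R with hS'
  have hle : S' ≤ B := Submodule.restrictScalars_mono R (Submodule.smul_mono_left (Ideal.pow_le_pow_right n.le_succ))
  set K := Submodule.comap B.subtype S' with hK
  set i : S' →ₗ[R] B := Submodule.inclusion hle with hi
  set p : B →ₗ[R] (B ⧸ K) := K.mkQ with hp
  have hii : Function.Injective i := Submodule.inclusion_injective hle
  have hps : Function.Surjective p := Submodule.mkQ_surjective K
  have hex : Function.Exact i p := by
    rw [LinearMap.exact_iff, Submodule.ker_mkQ, hK, ← Submodule.range_inclusion S' B hle]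
  haveI : Module.Flat R (B ⧸ K) := hflat n
  refine ⟨?_, ?_, ?_⟩
  · exact flat_coker_rTensor_injective i p hii hps hex
  · exact rTensor_exact N hex hps
  · exact LinearMap.rTensor_surjective N hps
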